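/- Let T and T̂ be two spanning trees on the same vertex set V, and let w, w̃ ∈ V be such that path_T(w,w̃) ≠ path_{T̂}(w,w̃). Then there exist edges f = (u,ũ) ∈ path_T(w,w̃) and g = (v,ṽ) ∈ path_{T̂}(w,w̃) such that: (i) f ∉ path_{T̂}(w,w̃) and g ∉ path_T(w,w̃); (ii) f ∈ path_T(v,ṽ) and g ∈ path_{T̂}(u,ũ). -/

import Mathlib

open Finset
open scoped Classical

noncomputable section

/-- A spin configuration on `p` vertices; `true ↦ +1`, `false ↦ -1`. -/
abbrev Conf (p : ℕ) := Fin p → Bool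

/-- The real spin value of a Boolean variable. -/
def spin (b : Bool) : ℝ := if b then 1 else -1

/-- `P` is a probability distribution on `Conf p`. -/
def IsDist {p : ℕ} (P : Conf p → ℝ) : Prop :=
  (∀ x, 0 ≤ P x) ∧ ∑ x : Conf p, P x = 1

/-- Pairwise correlation `μ_{ij} = E_P[X_i X_j]`. -/
def corr {p : ℕ} (P : Conf p → ℝ) (i j : Fin p) : ℝ :=
  ∑ x : Conf p, P x * spin (x i) * spin (x j)

/-- The Ising energy `∑_{(i,j) ∈ E} θ_{ij} x_i x_j` (each edge counted once, via `i < j`). -/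
def energy {p : ℕ} (G : SimpleGraph (Fin p)) (θ : Fin p → Fin p → ℝ) (x : Conf p) : ℝ :=
  ∑ i : Fin p, ∑ j : Fin p, if G.Adj i j ∧ i < j then θ i j * spin (x i) * spin (x j) else 0

/-- The zero-field Ising model on graph `G` with parameters `θ`:
`P(x) = exp(∑_{(i,j)∈E} θ_{ij} x_i x_j - Φ(θ))`. -/
def ising {p : ℕ} (G : SimpleGraph (Fin p)) (θ : Fin p → Fin p → ℝ) : Conf p → ℝ :=
  fun x => Real.exp (energy G θ x) / ∑ y : Conf p, Real.exp (energy G θ y)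

/-- `P ∈ 𝒫_G(α, β)`: zero-field Ising model on `G` with `α ≤ |θ_{ij}| ≤ β` on edges. -/
def MemIsing {p : ℕ} (G : SimpleGraph (Fin p)) (α β : ℝ) (P : Conf p → ℝ) : Prop :=
  ∃ θ : Fin p → Fin p → ℝ, (∀ i j, θ i j = θ j i) ∧
    (∀ i j, G.Adj i j → α ≤ |θ i j| ∧ |θ i j| ≤ β) ∧ P = ising G θ

/-- `P ∈ 𝒫_G`: zero-field Ising model on `G`, no constraint on parameter strength. -/
def MemIsingAll {p : ℕ} (G : SimpleGraph (Fin p)) (P : Conf p → ℝ) : Prop :=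
  ∃ θ : Fin p → Fin p → ℝ, (∀ i j, θ i j = θ j i) ∧ P = ising G θ

/-- Marginal of `P` on the pair `(i, j)` evaluated at `(a, b)`. -/
def margPair {p : ℕ} (P : Conf p → ℝ) (i j : Fin p) (a b : Bool) : ℝ :=
  ∑ x : Conf p, if x i = a ∧ x j = b then P x else 0

/-- Total variation distance between the `(i,j)`-pairwise marginals of `P` and `Q`. -/
def tvPair {p : ℕ} (P Q : Conf p → ℝ) (i j : Fin p) : ℝ :=
  (1/2) * ∑ a : Bool, ∑ b : Bool, |margPair P i j a b - margPair Q i j a b|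

/-- The small-set TV loss `L^(2)(P,Q)`: sup over two-element subsets of vertices of the TV
distance between the corresponding marginals. -/
def L2 {p : ℕ} (P Q : Conf p → ℝ) : ℝ :=
  ⨆ i : Fin p, ⨆ j : Fin p, ⨆ _ : i ≠ j, tvPair P Q i j

/-- Probability, under `n` i.i.d. samples from `P`, of the event `E`. -/
def Pr {p n : ℕ} (P : Conf p → ℝ) (E : (Fin n → Conf p) → Prop) : ℝ :=
  ∑ xs : Fin n → Conf p, if E xs then ∏ l : Fin n, P (xs l) else 0

/-- The empirical distribution of the samples `xs`. -/
def empDist {p n : ℕ} (xs : Fin n → Conf p) : Conf p → ℝ :=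
  fun x => ((Finset.univ.filter fun l => xs l = x).card : ℝ) / n

/-- Total weight of the edges of `G` under the weight function `w`. -/
def graphWeight {p : ℕ} (G : SimpleGraph (Fin p)) (w : Fin p → Fin p → ℝ) : ℝ :=
  ∑ i : Fin p, ∑ j : Fin p, if G.Adj i j ∧ i < j then w i j else 0

/-- `G` is a maximum-weight spanning tree for the weights `w` on the complete graph. -/
def IsMaxSpanningTree {p : ℕ} (w : Fin p → Fin p → ℝ) (G : SimpleGraph (Fin p)) : Prop :=
  G.IsTree ∧ ∀ G' : SimpleGraph (Fin p), G'.IsTree → graphWeight G' w ≤ graphWeight G w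

/-- `G` is a Chow–Liu tree for the samples `xs`: a maximum-weight spanning tree for the
weights `|μ̂_{ij}|` given by empirical correlations. -/
def IsChowLiu {p n : ℕ} (xs : Fin n → Conf p) (G : SimpleGraph (Fin p)) : Prop :=
  IsMaxSpanningTree (fun i j => |corr (empDist xs) i j|) G

/-- The reverse I-projection `Π_G(P)` of `P` onto zero-field Ising models on the tree
(or forest) `G`: the product-form distribution with uniform singleton marginals matching the
pairwise correlations of `P` across the edges of `G`. -/
def proj {p : ℕ} (G : SimpleGraph (Fin p)) (P : Conf p → ℝ) : Conf p → ℝ :=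
  fun x => ((1:ℝ)/2)^p *
    ∏ i : Fin p, ∏ j : Fin p,
      if G.Adj i j ∧ i < j then 1 + corr P i j * spin (x i) * spin (x j) else 1

/-- The edge `(a,b)` of `G` lies on the (unique, when `G` is a tree) path in `G` between
`u` and `v`: it is an edge whose removal disconnects `u` from `v`. -/
def onPath {p : ℕ} (G : SimpleGraph (Fin p)) (u v a b : Fin p) : Prop :=
  G.Adj a b ∧ ¬ (G.deleteEdges {s(a, b)}).Reachable u v

/-- Product of `f` over the edges on the path in `G` between `u` and `v`. -/
def pathProd {p : ℕ} (G : SimpleGraph (Fin p)) (f : Fin p → Fin p → ℝ) (u v : Fin p) : ℝ :=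
  ∏ i : Fin p, ∏ j : Fin p, if onPath G u v i j ∧ i < j then f i j else 1

/-- Product of `f` over the edges on the path in `G` between `u` and `v`, excluding the
edge `(a,b)`. -/
def pathProdExcl {p : ℕ} (G : SimpleGraph (Fin p)) (f : Fin p → Fin p → ℝ)
    (u v a b : Fin p) : ℝ :=
  ∏ i : Fin p, ∏ j : Fin p,
    if onPath G u v i j ∧ i < j ∧ s(i, j) ≠ s(a, b) then f i j else 1

/-- Inverse hyperbolic tangent. -/
def atanh (x : ℝ) : ℝ := (1/2) * Real.log ((1 + x) / (1 - x))

end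

namespace TwoTreesAux

open SimpleGraph Walk

variable {V : Type*} {G : SimpleGraph V}

lemma getVert_mem_support (p : G.Walk u v) (t : ℕ) : p.getVert t ∈ p.support := by
  induction p generalizing t with
  | nil => cases t <;> simp [Walk.getVert]
  | cons h q ih =>
    cases t with
    | zero => simp
    | succ t =>
      rw [Walk.getVert_cons_succ, Walk.support_cons]
      exact List.mem_cons_of_mem _ (ih t)

lemma edge_mem_edges (p : G.Walk u v) {t : ℕ} (ht : t < p.length) :
    s(p.getVert t, p.getVert (t+1)) ∈ p.edges := by
  induction p generalizing t with
  | nil => simp at ht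
  | cons h q ih =>
    cases t with
    | zero =>
      rw [Walk.edges_cons]
      have h1 : (Walk.cons h q).getVert 0 = _ := Walk.getVert_zero _
      have h2 : (Walk.cons h q).getVert 1 = q.getVert 0 := Walk.getVert_cons_succ _ _
      rw [h1, h2, Walk.getVert_zero]
      exact List.mem_cons_self
    | succ t =>
      rw [Walk.edges_cons, Walk.getVert_cons_succ, Walk.getVert_cons_succ]
      refine List.mem_cons_of_mem _ (ih ?_)
      rw [Walk.length_cons] at ht
      omega

lemma exists_index_of_mem_edges (p : G.Walk u v) {e : Sym2 V} (he : e ∈ p.edges) :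
    ∃ t, t < p.length ∧ e = s(p.getVert t, p.getVert (t+1)) := by
  induction p with
  | nil => simp at he
  | cons h q ih =>
    rw [Walk.edges_cons, List.mem_cons] at he
    rcases he with he | he
    · refine ⟨0, by rw [Walk.length_cons]; omega, ?_⟩
      rw [Walk.getVert_zero]
      have h2 : (Walk.cons h q).getVert 1 = q.getVert 0 := Walk.getVert_cons_succ _ _
      rw [h2, Walk.getVert_zero]
      exact he
    · obtain ⟨t, ht, rfl⟩ := ih he
      refine ⟨t+1, by rw [Walk.length_cons]; omega, ?_⟩
      rw [Walk.getVert_cons_succ, Walk.getVert_cons_succ]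

lemma getVert_inj (p : G.Walk u v) (hp : p.IsPath) :
    ∀ a b : ℕ, a ≤ p.length → b ≤ p.length → p.getVert a = p.getVert b → a = b := by
  induction p with
  | nil =>
    intro a b ha hb _
    rw [Walk.length_nil] at ha hb
    omega
  | cons h q ih =>
    rw [Walk.cons_isPath_iff] at hp
    intro a b ha hb heq
    match a, b with
    | 0, 0 => rfl
    | 0, b+1 =>
      exfalso
      rw [Walk.getVert_zero, Walk.getVert_cons_succ] at heq
      exact hp.2 (by rw [heq]; exact getVert_mem_support q b)
    | a+1, 0 =>
      exfalso
      rw [Walk.getVert_zero, Walk.getVert_cons_succ] at heq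
      exact hp.2 (by rw [← heq]; exact getVert_mem_support q a)
    | a+1, b+1 =>
      rw [Walk.getVert_cons_succ, Walk.getVert_cons_succ] at heq
      rw [Walk.length_cons] at ha hb
      have := ih hp.1 a b (by omega) (by omega) heq
      omega

lemma edge_index_inj (p : G.Walk u v) (hp : p.IsPath) {a b : ℕ}
    (ha : a < p.length) (hb : b < p.length)
    (h : s(p.getVert a, p.getVert (a+1)) = s(p.getVert b, p.getVert (b+1))) : a = b := by
  rw [Sym2.eq_iff] at h
  rcases h with ⟨h1, _⟩ | ⟨h1, h2⟩
  · exact getVert_inj p hp a b (by omega) (by omega) h1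
  · have e1 := getVert_inj p hp a (b+1) (by omega) (by omega) h1
    have e2 := getVert_inj p hp (a+1) b (by omega) (by omega) h2
    omega

lemma suffix_reach (p : G.Walk u v) (hp : p.IsPath) {i : ℕ} (hi : i < p.length) :
    ∀ t, i < t → t ≤ p.length →
      (G.deleteEdges {s(p.getVert i, p.getVert (i+1))}).Reachable (p.getVert t) v := by
  have key : ∀ d t, p.length - t ≤ d → i < t → t ≤ p.length →
      (G.deleteEdges {s(p.getVert i, p.getVert (i+1))}).Reachable (p.getVert t) v := by
    intro d
    induction d with
    | zero =>
      intro t hd _ ht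
      have hteq : t = p.length := by omega
      subst hteq
      rw [Walk.getVert_length]
    | succ d ihd =>
      intro t hd hit ht
      rcases eq_or_lt_of_le ht with hteq | hlt
      · subst hteq
        rw [Walk.getVert_length]
      · refine (SimpleGraph.Adj.reachable ?_).trans (ihd (t+1) (by omega) (by omega) (by omega))
        rw [SimpleGraph.deleteEdges_adj]
        refine ⟨p.adj_getVert_succ hlt, ?_⟩
        simp only [Set.mem_singleton_iff]
        intro hcon
        have := edge_index_inj p hp hlt hi hcon
        omega
  exact fun t => key p.length t (by omega)

lemma cut_iff {c d : V} (hT : G.IsTree) (p : G.Walk u v) (hp : p.IsPath) :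
    ¬ (G.deleteEdges {s(c, d)}).Reachable u v ↔ s(c, d) ∈ p.edges := by
  constructor
  · intro hn
    by_contra hmem
    refine hn ⟨p.toDeleteEdges {s(c,d)} ?_⟩
    intro e he
    simp only [Set.mem_singleton_iff]
    rintro rfl
    exact hmem he
  · intro hmem hr
    obtain ⟨W⟩ := hr
    have hWP : W.bypass.IsPath := W.bypass_isPath
    have hedge : ∀ e, e ∈ W.bypass.edges → e ∈ G.edgeSet := by
      intro e he
      have h1 := W.bypass.edges_subset_edgeSet he
      rw [SimpleGraph.edgeSet_deleteEdges] at h1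
      exact h1.1
    have hTpath : (W.bypass.transfer G hedge).IsPath := hWP.transfer hedge
    have hEq : p = W.bypass.transfer G hedge :=
      (hT.existsUnique_path u v).unique hp hTpath
    rw [hEq, Walk.edges_transfer] at hmem
    have h2 := W.bypass.edges_subset_edgeSet hmem
    rw [SimpleGraph.edgeSet_deleteEdges] at h2
    exact h2.2 rfl

lemma nest [DecidableEq V] (hT : G.IsTree) (p : G.Walk u v) (hp : p.IsPath) {i i' : ℕ}
    (hii : i ≤ i') (hi' : i' < p.length) {z : V}
    (hz : (G.deleteEdges {s(p.getVert i, p.getVert (i+1))}).Reachable u z) :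
    (G.deleteEdges {s(p.getVert i', p.getVert (i'+1))}).Reachable u z := by
  rcases eq_or_lt_of_le hii with hieq | hlt
  · subst hieq; exact hz
  have hi : i < p.length := lt_trans hlt hi'
  obtain ⟨Wz⟩ := hT.isConnected.preconnected u z
  have hQ : Wz.bypass.IsPath := Wz.bypass_isPath
  have hQe1 : s(p.getVert i, p.getVert (i+1)) ∉ Wz.bypass.edges := by
    intro hmem
    exact (cut_iff hT Wz.bypass hQ).mpr hmem hz
  have hQe2 : s(p.getVert i', p.getVert (i'+1)) ∉ Wz.bypass.edges := by
    intro hmem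
    have hsupQ : p.getVert i' ∈ Wz.bypass.support :=
      Wz.bypass.fst_mem_support_of_mem_edges hmem
    have hsupp : p.getVert i' ∈ p.support := getVert_mem_support p i'
    have hq1 : (p.takeUntil _ hsupp).IsPath := hp.takeUntil hsupp
    have hQ1 : (Wz.bypass.takeUntil _ hsupQ).IsPath := hQ.takeUntil hsupQ
    have hEq : p.takeUntil _ hsupp = Wz.bypass.takeUntil _ hsupQ :=
      (hT.existsUnique_path u (p.getVert i')).unique hq1 hQ1
    have hnr : ¬ (G.deleteEdges {s(p.getVert i, p.getVert (i+1))}).Reachable u (p.getVert i') := by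
      intro hr
      have h2 := suffix_reach p hp hi i' hlt (le_of_lt hi')
      exact (cut_iff hT p hp).mpr (edge_mem_edges p hi) (hr.trans h2)
    have hmem1 : s(p.getVert i, p.getVert (i+1)) ∈ (p.takeUntil _ hsupp).edges :=
      (cut_iff hT _ hq1).mp hnr
    rw [hEq] at hmem1
    exact hQe1 (Wz.bypass.edges_takeUntil_subset hsupQ hmem1)
  refine ⟨Wz.bypass.toDeleteEdges _ ?_⟩
  intro e he
  simp only [Set.mem_singleton_iff]
  rintro rfl
  exact hQe2 he

lemma main_aux {n : ℕ} {G G' : SimpleGraph (Fin n)} (hG : G.IsTree) (hG' : G'.IsTree)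
    {w w' : Fin n} (P : G.Walk w w') (hP : P.IsPath) (Q : G'.Walk w w') (hQ : Q.IsPath)
    (hww : w ≠ w') :
    ∀ d i, P.length - i ≤ d → i < P.length →
      s(P.getVert i, P.getVert (i+1)) ∉ G'.edgeSet →
      (∀ j, j < Q.length → s(Q.getVert j, Q.getVert (j+1)) ∉ G.edgeSet →
        (∀ r, r ≤ j →
          (G.deleteEdges {s(P.getVert i, P.getVert (i+1))}).Reachable w (Q.getVert r)) →
        ¬ (G.deleteEdges {s(P.getVert i, P.getVert (i+1))}).Reachable w (Q.getVert (j+1)) →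
        ∀ t, t ≤ i →
          (G'.deleteEdges {s(Q.getVert j, Q.getVert (j+1))}).Reachable w (P.getVert t)) →
      ∃ u u' v v' : Fin n,
        onPath G w w' u u' ∧ onPath G' w w' v v' ∧
        ¬ onPath G' w w' u u' ∧ ¬ onPath G w w' v v' ∧
        onPath G v v' u u' ∧ onPath G' u u' v v' := by
  intro d
  induction d with
  | zero => intro i h0 hik _ _; omega
  | succ d ihd =>
    intro i hd hik hfE HC
    have hadjf : G.Adj (P.getVert i) (P.getVert (i+1)) := P.adj_getVert_succ hik
    have hSw' : ¬ (G.deleteEdges {s(P.getVert i, P.getVert (i+1))}).Reachable w w' :=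
      (cut_iff hG P hP).mpr (edge_mem_edges P hik)
    have hm0 : 0 < Q.length := by
      rcases Nat.eq_zero_or_pos Q.length with h0 | h
      · exfalso
        apply hww
        have h1 := Q.getVert_of_length_le (i := 0) (by omega)
        rw [Walk.getVert_zero] at h1
        exact h1
      · exact h
    have hwitQ : ¬ (G.deleteEdges {s(P.getVert i, P.getVert (i+1))}).Reachable w
        (Q.getVert (Q.length - 1 + 1)) := by
      have hh : Q.length - 1 + 1 = Q.length := by omega
      rw [hh, Walk.getVert_length]
      exact hSw'
    have hjex : ∃ j, ¬ (G.deleteEdges {s(P.getVert i, P.getVert (i+1))}).Reachable w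
        (Q.getVert (j+1)) := ⟨_, hwitQ⟩
    have hjspec := Nat.find_spec hjex
    have hjle : Nat.find hjex ≤ Q.length - 1 := Nat.find_le hwitQ
    set j := Nat.find hjex with hjdef
    have hjm : j < Q.length := by omega
    have hyS : ∀ r, r ≤ j →
        (G.deleteEdges {s(P.getVert i, P.getVert (i+1))}).Reachable w (Q.getVert r) := by
      intro r hr
      cases r with
      | zero =>
        rw [Walk.getVert_zero]
      | succ r => exact not_not.mp (Nat.find_min hjex (by omega))
    have hadjg : G'.Adj (Q.getVert j) (Q.getVert (j+1)) := Q.adj_getVert_succ hjm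
    have hgE : s(Q.getVert j, Q.getVert (j+1)) ∉ G.edgeSet := by
      intro hmem
      by_cases hfg : s(Q.getVert j, Q.getVert (j+1)) = s(P.getVert i, P.getVert (i+1))
      · exact hfE (hfg ▸ (SimpleGraph.mem_edgeSet _).mpr hadjg)
      · have hadjdel : (G.deleteEdges {s(P.getVert i, P.getVert (i+1))}).Adj
            (Q.getVert j) (Q.getVert (j+1)) := by
          rw [SimpleGraph.deleteEdges_adj]
          exact ⟨(SimpleGraph.mem_edgeSet _).mp hmem, by simpa using hfg⟩
        exact hjspec ((hyS j le_rfl).trans hadjdel.reachable)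
    have hgQ : s(Q.getVert j, Q.getVert (j+1)) ∈ Q.edges := edge_mem_edges Q hjm
    have hCw' : ¬ (G'.deleteEdges {s(Q.getVert j, Q.getVert (j+1))}).Reachable w w' :=
      (cut_iff hG' Q hQ).mpr hgQ
    by_cases hmut :
        ((G'.deleteEdges {s(Q.getVert j, Q.getVert (j+1))}).Reachable w (P.getVert i) ↔
          (G'.deleteEdges {s(Q.getVert j, Q.getVert (j+1))}).Reachable w (P.getVert (i+1)))
    · -- same side: recurse with a later edge of P
      have hCx : ∀ t, t ≤ i →
          (G'.deleteEdges {s(Q.getVert j, Q.getVert (j+1))}).Reachable w (P.getVert t) :=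
        HC j hjm hgE hyS hjspec
      have hCpre : ∀ t, t ≤ i+1 →
          (G'.deleteEdges {s(Q.getVert j, Q.getVert (j+1))}).Reachable w (P.getVert t) := by
        intro t ht
        rcases Nat.lt_or_ge t (i+1) with h | h
        · exact hCx t (by omega)
        · have hteq : t = i+1 := by omega
          rw [hteq]
          exact hmut.mp (hCx i le_rfl)
      have hk0 : 0 < P.length := by omega
      have hwitP : ¬ (G'.deleteEdges {s(Q.getVert j, Q.getVert (j+1))}).Reachable w
          (P.getVert (P.length - 1 + 1)) := by
        have hh : P.length - 1 + 1 = P.length := by omega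
        rw [hh, Walk.getVert_length]
        exact hCw'
      have hiex : ∃ i', ¬ (G'.deleteEdges {s(Q.getVert j, Q.getVert (j+1))}).Reachable w
          (P.getVert (i'+1)) := ⟨_, hwitP⟩
      have hi'spec := Nat.find_spec hiex
      have hi'le : Nat.find hiex ≤ P.length - 1 := Nat.find_le hwitP
      set i' := Nat.find hiex with hi'def
      have hi'k : i' < P.length := by omega
      have hxC : ∀ t, t ≤ i' →
          (G'.deleteEdges {s(Q.getVert j, Q.getVert (j+1))}).Reachable w (P.getVert t) := by
        intro t ht
        cases t with
        | zero =>
          rw [Walk.getVert_zero]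
        | succ t => exact not_not.mp (Nat.find_min hiex (by omega))
      have hii' : i + 1 ≤ i' := by
        by_contra hcon
        exact hi'spec (hCpre (i'+1) (by omega))
      have hf'E : s(P.getVert i', P.getVert (i'+1)) ∉ G'.edgeSet := by
        intro hmem
        by_cases hfg : s(P.getVert i', P.getVert (i'+1)) = s(Q.getVert j, Q.getVert (j+1))
        · exact hgE (hfg ▸ (SimpleGraph.mem_edgeSet _).mpr (P.adj_getVert_succ hi'k))
        · have hadjdel : (G'.deleteEdges {s(Q.getVert j, Q.getVert (j+1))}).Adj
              (P.getVert i') (P.getVert (i'+1)) := by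
            rw [SimpleGraph.deleteEdges_adj]
            exact ⟨(SimpleGraph.mem_edgeSet _).mp hmem, by simpa using hfg⟩
          exact hi'spec ((hxC i' le_rfl).trans hadjdel.reachable)
      refine ihd i' (by omega) hi'k hf'E ?_
      intro j2 hj2m hj2E hpre2 hnpre2 t ht
      have hjj2 : j ≤ j2 := by
        by_contra hcon
        refine hnpre2 (nest hG P hP (by omega : i ≤ i') hi'k ?_)
        exact hyS (j2+1) (by omega)
      exact nest hG' Q hQ hjj2 hj2m (hxC t ht)
    · -- opposite sides: we found a mutual pair
      refine ⟨P.getVert i, P.getVert (i+1), Q.getVert j, Q.getVert (j+1), ?_, ?_, ?_, ?_, ?_, ?_⟩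
      · exact ⟨hadjf, hSw'⟩
      · exact ⟨hadjg, hCw'⟩
      · rintro ⟨hadj, -⟩
        exact hfE ((SimpleGraph.mem_edgeSet _).mpr hadj)
      · rintro ⟨hadj, -⟩
        exact hgE ((SimpleGraph.mem_edgeSet _).mpr hadj)
      · refine ⟨hadjf, fun hr => ?_⟩
        exact hjspec ((hyS j le_rfl).trans hr)
      · refine ⟨hadjg, fun hr => ?_⟩
        exact hmut ⟨fun h1 => h1.trans hr, fun h2 => h2.trans hr.symm⟩

end TwoTreesAux

/-- Two trees lemma.
Let `T` and `T̂` be two spanning trees on the same vertex set and `w, w̃` vertices such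
that the `w–w̃` paths in `T` and `T̂` differ. Then there exist edges
`f = (u,ũ) ∈ path_T(w,w̃)` and `g = (v,ṽ) ∈ path_{T̂}(w,w̃)` with
(i) `f ∉ path_{T̂}(w,w̃)` and `g ∉ path_T(w,w̃)`;
(ii) `f ∈ path_T(v,ṽ)` and `g ∈ path_{T̂}(u,ũ)`. -/
theorem two_trees_lemma
    (p : ℕ) (G G' : SimpleGraph (Fin p)) (hG : G.IsTree) (hG' : G'.IsTree)
    (w w' : Fin p)
    (hne : ¬ ∀ i j : Fin p, onPath G w w' i j ↔ onPath G' w w' i j) :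
    ∃ u u' v v' : Fin p,
      onPath G w w' u u' ∧ onPath G' w w' v v' ∧
      ¬ onPath G' w w' u u' ∧ ¬ onPath G w w' v v' ∧
      onPath G v v' u u' ∧ onPath G' u u' v v' := by
  classical
  have hww : w ≠ w' := by
    rintro rfl
    apply hne
    intro i j
    constructor
    · rintro ⟨-, hr⟩
      exact (hr (SimpleGraph.Reachable.refl w)).elim
    · rintro ⟨-, hr⟩
      exact (hr (SimpleGraph.Reachable.refl w)).elim
  obtain ⟨P0⟩ := hG.isConnected.preconnected w w'
  have hP : P0.bypass.IsPath := P0.bypass_isPath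
  obtain ⟨Q0⟩ := hG'.isConnected.preconnected w w'
  have hQ : Q0.bypass.IsPath := Q0.bypass_isPath
  set P := P0.bypass with hPdef
  set Q := Q0.bypass with hQdef
  by_cases hex : ∃ i, i < P.length ∧ s(P.getVert i, P.getVert (i+1)) ∉ G'.edgeSet
  · have hspec := Nat.find_spec hex
    set i0 := Nat.find hex with hi0def
    refine TwoTreesAux.main_aux hG hG' P hP Q hQ hww P.length i0 (by omega) hspec.1 hspec.2 ?_
    intro j hjm hjE hpre hnpre t
    clear hpre hnpre
    induction t with
    | zero =>
      intro _
      rw [SimpleGraph.Walk.getVert_zero]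
    | succ t iht =>
      intro ht
      have h1 := iht (by omega)
      refine h1.trans (SimpleGraph.Adj.reachable ?_)
      rw [SimpleGraph.deleteEdges_adj]
      have htlen : t < P.length := by
        have := hspec.1
        omega
      have hmem : s(P.getVert t, P.getVert (t+1)) ∈ G'.edgeSet := by
        by_contra hno
        exact Nat.find_min hex (m := t) (by omega) ⟨htlen, hno⟩
      refine ⟨(SimpleGraph.mem_edgeSet _).mp hmem, ?_⟩
      simp only [Set.mem_singleton_iff]
      intro hcon
      exact hjE (hcon ▸ (SimpleGraph.mem_edgeSet _).mpr (P.adj_getVert_succ htlen))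
  · push_neg at hex
    exfalso
    apply hne
    have hPE : ∀ e, e ∈ P.edges → e ∈ G'.edgeSet := by
      intro e he
      obtain ⟨t, htl, rfl⟩ := TwoTreesAux.exists_index_of_mem_edges P he
      exact hex t htl
    have hQ2path : (P.transfer G' hPE).IsPath := hP.transfer hPE
    intro a b
    constructor
    · rintro ⟨hadj, hr⟩
      have hmem : s(a,b) ∈ P.edges := (TwoTreesAux.cut_iff hG P hP).mp hr
      have hmem2 : s(a,b) ∈ (P.transfer G' hPE).edges := by
        rw [SimpleGraph.Walk.edges_transfer]
        exact hmem
      exact ⟨(SimpleGraph.mem_edgeSet _).mp (hPE _ hmem),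
        (TwoTreesAux.cut_iff hG' (P.transfer G' hPE) hQ2path).mpr hmem2⟩
    · rintro ⟨hadj, hr⟩
      have hmem2 : s(a,b) ∈ (P.transfer G' hPE).edges :=
        (TwoTreesAux.cut_iff hG' (P.transfer G' hPE) hQ2path).mp hr
      rw [SimpleGraph.Walk.edges_transfer] at hmem2
      exact ⟨(SimpleGraph.mem_edgeSet _).mp (P.edges_subset_edgeSet hmem2),
        (TwoTreesAux.cut_iff hG P hP).mpr hmem2⟩
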